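/- Let w0, x0, y0, z0 ∈ ℂ satisfy w0²z0² − x0²y0² ≠ 0, w0²x0² − y0²z0² ≠ 0, w0²y0² − x0²z0² ≠ 0, and define A = (w0⁴−x0⁴−y0⁴+z0⁴)/(w0²z0²−x0²y0²), B = (w0⁴+x0⁴−y0⁴−z0⁴)/(w0²x0²−y0²z0²), C = (w0⁴−x0⁴+y0⁴−z0⁴)/(w0²y0²−x0²z0²), D = w0x0y0z0·∏_{ε,ε'∈{±1}}(w0²+εx0²+ε'y0²+εε'z0²) / [(w0²z0²−x0²y0²)(w0²x0²−y0²z0²)(w0²y0²−x0²z0²)]. Let F be the Hudson quartic with these parameters. Then each of the sixteen points (w0,x0,y0,z0), (−w0,−x0,y0,z0), (−w0,x0,−y0,z0), (−w0,x0,y0,−z0), (x0,w0,z0,y0), (−x0,−w0,z0,y0), (−x0,w0,−z0,y0), (−x0,w0,z0,−y0), (y0,z0,w0,x0), (−y0,−z0,w0,x0), (−y0,z0,−w0,x0), (−y0,z0,w0,−x0), (z0,y0,x0,w0), (−z0,−y0,x0,w0), (−z0,y0,−x0,w0), (−z0,y0,x0,−w0) is a singular point of the quartic surface F = 0; that is,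 F and all four partial derivatives ∂F/∂w, ∂F/∂x, ∂F/∂y, ∂F/∂z vanish at each of these points. -/

import Mathlib

/-- Derivative of a generic quartic `s^4 + c2 s^2 + c1 s + c0`. -/
lemma hudson_dquartic (c2 c1 c0 t : ℂ) :
    deriv (fun s : ℂ => s^4 + c2*s^2 + c1*s + c0) t = 4*t^3 + 2*c2*t + c1 := by
  have h : HasDerivAt (fun s : ℂ => s^4 + c2*s^2 + c1*s + c0) (4*t^3 + 2*c2*t + c1) t := by
    have := (((hasDerivAt_pow 4 t).add ((hasDerivAt_pow 2 t).const_mul c2)).add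
      ((hasDerivAt_id t).const_mul c1)).add_const c0
    refine this.congr_deriv ?_
    push_cast
    ring
  exact h.deriv

/-- The Hudson quartic polynomial with parameters `A, B, C, D`. -/
noncomputable def hudsonQ (A B C D w x y z : ℂ) : ℂ :=
  w^4 + x^4 + y^4 + z^4 + 2*D*w*x*y*z - A*(w^2*z^2 + x^2*y^2)
    - B*(w^2*x^2 + y^2*z^2) - C*(w^2*y^2 + x^2*z^2)

lemma hudson_dw (A B C D x y z w : ℂ) :
    deriv (fun t => hudsonQ A B C D t x y z) w
      = 4*w^3 + 2*(-(A*z^2) - B*x^2 - C*y^2)*w + 2*D*x*y*z := by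
  rw [show (fun t => hudsonQ A B C D t x y z)
      = fun s : ℂ => s^4 + (-(A*z^2) - B*x^2 - C*y^2)*s^2 + (2*D*x*y*z)*s
          + (x^4 + y^4 + z^4 - A*(x^2*y^2) - B*(y^2*z^2) - C*(x^2*z^2)) from by
    funext s; unfold hudsonQ; ring]
  exact hudson_dquartic _ _ _ _

lemma hudson_dx (A B C D w y z x : ℂ) :
    deriv (fun t => hudsonQ A B C D w t y z) x
      = 4*x^3 + 2*(-(A*y^2) - B*w^2 - C*z^2)*x + 2*D*w*y*z := by
  rw [show (fun t => hudsonQ A B C D w t y z)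
      = fun s : ℂ => s^4 + (-(A*y^2) - B*w^2 - C*z^2)*s^2 + (2*D*w*y*z)*s
          + (w^4 + y^4 + z^4 - A*(w^2*z^2) - B*(y^2*z^2) - C*(w^2*y^2)) from by
    funext s; unfold hudsonQ; ring]
  exact hudson_dquartic _ _ _ _

lemma hudson_dy (A B C D w x z y : ℂ) :
    deriv (fun t => hudsonQ A B C D w x t z) y
      = 4*y^3 + 2*(-(A*x^2) - B*z^2 - C*w^2)*y + 2*D*w*x*z := by
  rw [show (fun t => hudsonQ A B C D w x t z)
      = fun s : ℂ => s^4 + (-(A*x^2) - B*z^2 - C*w^2)*s^2 + (2*D*w*x*z)*s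
          + (w^4 + x^4 + z^4 - A*(w^2*z^2) - B*(w^2*x^2) - C*(x^2*z^2)) from by
    funext s; unfold hudsonQ; ring]
  exact hudson_dquartic _ _ _ _

lemma hudson_dz (A B C D w x y z : ℂ) :
    deriv (fun t => hudsonQ A B C D w x y t) z
      = 4*z^3 + 2*(-(A*w^2) - B*y^2 - C*x^2)*z + 2*D*w*x*y := by
  rw [show (fun t => hudsonQ A B C D w x y t)
      = fun s : ℂ => s^4 + (-(A*w^2) - B*y^2 - C*x^2)*s^2 + (2*D*w*x*y)*s
          + (w^4 + x^4 + y^4 - A*(x^2*y^2) - B*(w^2*x^2) - C*(w^2*y^2)) from by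
    funext s; unfold hudsonQ; ring]
  exact hudson_dquartic _ _ _ _

set_option maxHeartbeats 4000000 in
/-- The sixteen listed points are singular points (nodes) of the Hudson quartic
surface `F = 0` with parameters `A, B, C, D` built from `w0, x0, y0, z0`: the
quartic and all four of its partial derivatives vanish at each of them. -/
theorem hudson_sixteen_nodes (w0 x0 y0 z0 A B C D : ℂ)
    (h1 : w0^2*z0^2 - x0^2*y0^2 ≠ 0)
    (h2 : w0^2*x0^2 - y0^2*z0^2 ≠ 0)
    (h3 : w0^2*y0^2 - x0^2*z0^2 ≠ 0)
    (hA : A = (w0^4 - x0^4 - y0^4 + z0^4) / (w0^2*z0^2 - x0^2*y0^2))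
    (hB : B = (w0^4 + x0^4 - y0^4 - z0^4) / (w0^2*x0^2 - y0^2*z0^2))
    (hC : C = (w0^4 - x0^4 + y0^4 - z0^4) / (w0^2*y0^2 - x0^2*z0^2))
    (hD : D = w0*x0*y0*z0 *
          ((w0^2 + x0^2 + y0^2 + z0^2) * (w0^2 + x0^2 - y0^2 - z0^2) *
           (w0^2 - x0^2 + y0^2 - z0^2) * (w0^2 - x0^2 - y0^2 + z0^2)) /
          ((w0^2*z0^2 - x0^2*y0^2) * (w0^2*x0^2 - y0^2*z0^2) * (w0^2*y0^2 - x0^2*z0^2))) :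
    ∀ p : ℂ × ℂ × ℂ × ℂ,
      p ∈ ([(w0, x0, y0, z0), (-w0, -x0, y0, z0), (-w0, x0, -y0, z0), (-w0, x0, y0, -z0),
            (x0, w0, z0, y0), (-x0, -w0, z0, y0), (-x0, w0, -z0, y0), (-x0, w0, z0, -y0),
            (y0, z0, w0, x0), (-y0, -z0, w0, x0), (-y0, z0, -w0, x0), (-y0, z0, w0, -x0),
            (z0, y0, x0, w0), (-z0, -y0, x0, w0), (-z0, y0, -x0, w0), (-z0, y0, x0, -w0)] :
            List (ℂ × ℂ × ℂ × ℂ)) →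
      hudsonQ A B C D p.1 p.2.1 p.2.2.1 p.2.2.2 = 0 ∧
      deriv (fun t => hudsonQ A B C D t p.2.1 p.2.2.1 p.2.2.2) p.1 = 0 ∧
      deriv (fun t => hudsonQ A B C D p.1 t p.2.2.1 p.2.2.2) p.2.1 = 0 ∧
      deriv (fun t => hudsonQ A B C D p.1 p.2.1 t p.2.2.2) p.2.2.1 = 0 ∧
      deriv (fun t => hudsonQ A B C D p.1 p.2.1 p.2.2.1 t) p.2.2.2 = 0 := by
  have hk : (w0^2*z0^2 - x0^2*y0^2) * (w0^2*x0^2 - y0^2*z0^2) * (w0^2*y0^2 - x0^2*z0^2) ≠ 0 :=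
    mul_ne_zero (mul_ne_zero h1 h2) h3
  have hA' : A * (w0^2*z0^2 - x0^2*y0^2) = w0^4 - x0^4 - y0^4 + z0^4 := by
    rw [hA, div_mul_cancel₀ _ h1]
  have hB' : B * (w0^2*x0^2 - y0^2*z0^2) = w0^4 + x0^4 - y0^4 - z0^4 := by
    rw [hB, div_mul_cancel₀ _ h2]
  have hC' : C * (w0^2*y0^2 - x0^2*z0^2) = w0^4 - x0^4 + y0^4 - z0^4 := by
    rw [hC, div_mul_cancel₀ _ h3]
  have hD' : D * ((w0^2*z0^2 - x0^2*y0^2) * (w0^2*x0^2 - y0^2*z0^2) * (w0^2*y0^2 - x0^2*z0^2))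
      = w0*x0*y0*z0 *
          ((w0^2 + x0^2 + y0^2 + z0^2) * (w0^2 + x0^2 - y0^2 - z0^2) *
           (w0^2 - x0^2 + y0^2 - z0^2) * (w0^2 - x0^2 - y0^2 + z0^2)) := by
    rw [hD, div_mul_cancel₀ _ hk]
  have E0 : w0^4 + x0^4 + y0^4 + z0^4 + 2*D*w0*x0*y0*z0 - A*(w0^2*z0^2 + x0^2*y0^2)
      - B*(w0^2*x0^2 + y0^2*z0^2) - C*(w0^2*y0^2 + x0^2*z0^2) = 0 := by
    refine mul_right_cancel₀ hk ?_
    linear_combination (-(w0^2*z0^2 + x0^2*y0^2) * ((w0^2*x0^2 - y0^2*z0^2) * (w0^2*y0^2 - x0^2*z0^2))) * hA'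
      + (-(w0^2*x0^2 + y0^2*z0^2) * ((w0^2*z0^2 - x0^2*y0^2) * (w0^2*y0^2 - x0^2*z0^2))) * hB'
      + (-(w0^2*y0^2 + x0^2*z0^2) * ((w0^2*z0^2 - x0^2*y0^2) * (w0^2*x0^2 - y0^2*z0^2))) * hC'
      + (2*w0*x0*y0*z0) * hD'
  have Ew : 4*w0^3 + 2*(-(A*z0^2) - B*x0^2 - C*y0^2)*w0 + 2*D*x0*y0*z0 = 0 := by
    refine mul_right_cancel₀ hk ?_
    linear_combination (-2*w0*z0^2 * ((w0^2*x0^2 - y0^2*z0^2) * (w0^2*y0^2 - x0^2*z0^2))) * hA'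
      + (-2*w0*x0^2 * ((w0^2*z0^2 - x0^2*y0^2) * (w0^2*y0^2 - x0^2*z0^2))) * hB'
      + (-2*w0*y0^2 * ((w0^2*z0^2 - x0^2*y0^2) * (w0^2*x0^2 - y0^2*z0^2))) * hC'
      + (2*x0*y0*z0) * hD'
  have Ex : 4*x0^3 + 2*(-(A*y0^2) - B*w0^2 - C*z0^2)*x0 + 2*D*w0*y0*z0 = 0 := by
    refine mul_right_cancel₀ hk ?_
    linear_combination (-2*x0*y0^2 * ((w0^2*x0^2 - y0^2*z0^2) * (w0^2*y0^2 - x0^2*z0^2))) * hA'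
      + (-2*x0*w0^2 * ((w0^2*z0^2 - x0^2*y0^2) * (w0^2*y0^2 - x0^2*z0^2))) * hB'
      + (-2*x0*z0^2 * ((w0^2*z0^2 - x0^2*y0^2) * (w0^2*x0^2 - y0^2*z0^2))) * hC'
      + (2*w0*y0*z0) * hD'
  have Ey : 4*y0^3 + 2*(-(A*x0^2) - B*z0^2 - C*w0^2)*y0 + 2*D*w0*x0*z0 = 0 := by
    refine mul_right_cancel₀ hk ?_
    linear_combination (-2*y0*x0^2 * ((w0^2*x0^2 - y0^2*z0^2) * (w0^2*y0^2 - x0^2*z0^2))) * hA'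
      + (-2*y0*z0^2 * ((w0^2*z0^2 - x0^2*y0^2) * (w0^2*y0^2 - x0^2*z0^2))) * hB'
      + (-2*y0*w0^2 * ((w0^2*z0^2 - x0^2*y0^2) * (w0^2*x0^2 - y0^2*z0^2))) * hC'
      + (2*w0*x0*z0) * hD'
  have Ez : 4*z0^3 + 2*(-(A*w0^2) - B*y0^2 - C*x0^2)*z0 + 2*D*w0*x0*y0 = 0 := by
    refine mul_right_cancel₀ hk ?_
    linear_combination (-2*z0*w0^2 * ((w0^2*x0^2 - y0^2*z0^2) * (w0^2*y0^2 - x0^2*z0^2))) * hA'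
      + (-2*z0*y0^2 * ((w0^2*z0^2 - x0^2*y0^2) * (w0^2*y0^2 - x0^2*z0^2))) * hB'
      + (-2*z0*x0^2 * ((w0^2*z0^2 - x0^2*y0^2) * (w0^2*x0^2 - y0^2*z0^2))) * hC'
      + (2*w0*x0*y0) * hD'
  intro p hp
  fin_cases hp <;>
    refine ⟨by simp only [hudsonQ]; linear_combination E0,
      by rw [hudson_dw]; first
        | linear_combination Ew | linear_combination -Ew
        | linear_combination Ex | linear_combination -Ex
        | linear_combination Ey | linear_combination -Ey
        | linear_combination Ez | linear_combination -Ez,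
      by rw [hudson_dx]; first
        | linear_combination Ew | linear_combination -Ew
        | linear_combination Ex | linear_combination -Ex
        | linear_combination Ey | linear_combination -Ey
        | linear_combination Ez | linear_combination -Ez,
      by rw [hudson_dy]; first
        | linear_combination Ew | linear_combination -Ew
        | linear_combination Ex | linear_combination -Ex
        | linear_combination Ey | linear_combination -Ey
        | linear_combination Ez | linear_combination -Ez,
      by rw [hudson_dz]; first
        | linear_combination Ew | linear_combination -Ew
        | linear_combination Ex | linear_combination -Ex
        | linear_combination Ey | linear_combination -Ey
        | linear_combination Ez | linear_combination -Ez⟩
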